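/- Let ψ : ℝ² → ℝ be C², let g be a (constant, for simplicity) positive definite symmetric 2×2 matrix with √g := √det(g), and let a, b : ℝ² → ℝ be C¹ functions. Define η_x = −√g·a·ψ^y − b·ψ_x and η_y = √g·a·ψ^x − b·ψ_y, where ψ^x = g^{xx}ψ_x + g^{xy}ψ_y and ψ^y = g^{xy}ψ_x + g^{yy}ψ_y. Then the 1-form η_x dx + η_y dy is closed (∂_y η_x = ∂_x η_y) if and only if a·Δψ + ∇ψ·∇a + {ψ, b} = 0, where Δψ = (1/√g)(∂_x(√g ψ^x) + ∂_y(√g ψ^y)), ∇ψ·∇a = ψ^x a_x + ψ^y a_y, and {ψ,b} = (ψ_x b_y − ψ_y b_x)/√g. -/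

import Mathlib

/-- The consistency equation (Eq. (5)): the 1-form η_x dx + η_y dy built from ψ, the
constant metric g and the functions a, b is closed iff a·Δψ + ∇ψ·∇a + {ψ,b} = 0. -/
theorem consistency_equation
    (ψ a b : ℝ × ℝ → ℝ) (gxx gxy gyy Gxx Gxy Gyy : ℝ)
    (hψ : ContDiff ℝ 2 ψ) (ha : ContDiff ℝ 1 a) (hb : ContDiff ℝ 1 b)
    -- g (lower indices Gxx, Gxy, Gyy) is constant, symmetric positive definite
    (hpos : 0 < Gxx) (hdet : 0 < Gxx * Gyy - Gxy ^ 2)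
    -- upper-index entries g^xx, g^xy, g^yy are the inverse of g
    (hinv1 : Gxx * gxx + Gxy * gxy = 1) (hinv2 : Gxx * gxy + Gxy * gyy = 0)
    (hinv3 : Gxy * gxx + Gyy * gxy = 0) (hinv4 : Gxy * gxy + Gyy * gyy = 1) :
    let sg : ℝ := Real.sqrt (Gxx * Gyy - Gxy ^ 2)
    let px : ℝ × ℝ → ℝ := fun q => fderiv ℝ ψ q (1, 0)
    let py : ℝ × ℝ → ℝ := fun q => fderiv ℝ ψ q (0, 1)
    let pux : ℝ × ℝ → ℝ := fun q => gxx * px q + gxy * py q   -- ψ^x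
    let puy : ℝ × ℝ → ℝ := fun q => gxy * px q + gyy * py q   -- ψ^y
    let ηx : ℝ × ℝ → ℝ := fun q => -(sg * a q * puy q) - b q * px q
    let ηy : ℝ × ℝ → ℝ := fun q => sg * a q * pux q - b q * py q
    let lap : ℝ × ℝ → ℝ := fun q =>
      (fderiv ℝ (fun r => sg * pux r) q (1, 0)
        + fderiv ℝ (fun r => sg * puy r) q (0, 1)) / sg
    ∀ q : ℝ × ℝ,
      (fderiv ℝ ηx q (0, 1) = fderiv ℝ ηy q (1, 0)) ↔
      (a q * lap q
        + (pux q * fderiv ℝ a q (1, 0) + puy q * fderiv ℝ a q (0, 1))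
        + (px q * fderiv ℝ b q (0, 1) - py q * fderiv ℝ b q (1, 0)) / sg = 0) := by
  intro sg px py pux puy ηx ηy lap q
  have hs : sg ≠ 0 := ne_of_gt (Real.sqrt_pos.mpr hdet)
  have hψd : Differentiable ℝ ψ := hψ.differentiable (by norm_num)
  have hdψ : ContDiff ℝ 1 (fderiv ℝ ψ) := hψ.fderiv_right (by norm_num)
  have hdψd : Differentiable ℝ (fderiv ℝ ψ) := hdψ.differentiable (by norm_num)
  set A2 := fderiv ℝ (fderiv ℝ ψ) q with hA2
  have key : ∀ v : ℝ × ℝ, HasFDerivAt (fun r => fderiv ℝ ψ r v)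
      ((ContinuousLinearMap.apply ℝ ℝ v).comp A2) q :=
    fun v => (ContinuousLinearMap.apply ℝ ℝ v).hasFDerivAt.comp q (hdψd q).hasFDerivAt
  have Hpx : HasFDerivAt px ((ContinuousLinearMap.apply ℝ ℝ ((1:ℝ),(0:ℝ))).comp A2) q := key _
  have Hpy : HasFDerivAt py ((ContinuousLinearMap.apply ℝ ℝ ((0:ℝ),(1:ℝ))).comp A2) q := key _
  have Ha : HasFDerivAt a (fderiv ℝ a q) q := (ha.differentiable (by norm_num) q).hasFDerivAt
  have Hb : HasFDerivAt b (fderiv ℝ b q) q := (hb.differentiable (by norm_num) q).hasFDerivAt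
  have Hpux : HasFDerivAt pux
      (gxx • ((ContinuousLinearMap.apply ℝ ℝ ((1:ℝ),(0:ℝ))).comp A2)
        + gxy • ((ContinuousLinearMap.apply ℝ ℝ ((0:ℝ),(1:ℝ))).comp A2)) q :=
    (Hpx.const_mul gxx).add (Hpy.const_mul gxy)
  have Hpuy : HasFDerivAt puy
      (gxy • ((ContinuousLinearMap.apply ℝ ℝ ((1:ℝ),(0:ℝ))).comp A2)
        + gyy • ((ContinuousLinearMap.apply ℝ ℝ ((0:ℝ),(1:ℝ))).comp A2)) q :=
    (Hpx.const_mul gxy).add (Hpy.const_mul gyy)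
  have hsym : A2 (0,1) (1,0) = A2 (1,0) (0,1) :=
    second_derivative_symmetric (fun y => (hψd y).hasFDerivAt) (hdψd q).hasFDerivAt _ _
  have e1 : fderiv ℝ ηx q (0,1) =
      -(sg * (a q * (gxy * A2 (0,1) (1,0) + gyy * A2 (0,1) (0,1))
        + puy q * fderiv ℝ a q (0,1)))
      - (b q * A2 (0,1) (1,0) + px q * fderiv ℝ b q (0,1)) := by
    have H : HasFDerivAt ηx _ q := (((Ha.const_mul sg).mul Hpuy).neg).sub (Hb.mul Hpx)
    rw [H.fderiv]
    simp [ContinuousLinearMap.comp_apply]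
    ring
  have e2 : fderiv ℝ ηy q (1,0) =
      (sg * (a q * (gxx * A2 (1,0) (1,0) + gxy * A2 (1,0) (0,1))
        + pux q * fderiv ℝ a q (1,0)))
      - (b q * A2 (1,0) (0,1) + py q * fderiv ℝ b q (1,0)) := by
    have H : HasFDerivAt ηy _ q := ((Ha.const_mul sg).mul Hpux).sub (Hb.mul Hpy)
    rw [H.fderiv]
    simp [ContinuousLinearMap.comp_apply]
    ring
  have e3 : fderiv ℝ (fun r => sg * pux r) q (1,0) =
      sg * (gxx * A2 (1,0) (1,0) + gxy * A2 (1,0) (0,1)) := by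
    rw [(Hpux.const_mul sg).fderiv]
    simp [ContinuousLinearMap.comp_apply]
    ring
  have e4 : fderiv ℝ (fun r => sg * puy r) q (0,1) =
      sg * (gxy * A2 (0,1) (1,0) + gyy * A2 (0,1) (0,1)) := by
    rw [(Hpuy.const_mul sg).fderiv]
    simp [ContinuousLinearMap.comp_apply]
    ring
  simp only [lap, e1, e2, e3, e4]
  constructor
  · intro h
    field_simp
    linear_combination -h - b q * hsym
  · intro h
    field_simp at h
    linear_combination -h - b q * hsym
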